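/- Let A and B be 2×2 binary matrices. If the four binary strings u(100), l(100), u(101), l(101) are pairwise comparable under ≤, then G^k(A,B) is word-representable for every integer k ≥ 0. -/

import Mathlib

/-- A word `w` over alphabet `V` represents the graph `G`: every vertex occurs in `w`,
and two distinct vertices are adjacent iff their letters alternate in `w`. -/
def WordRepresents {V : Type*} [DecidableEq V] (w : List V) (G : SimpleGraph V) : Prop :=
  (∀ v : V, v ∈ w) ∧
  ∀ x y : V, x ≠ y →
    (G.Adj x y ↔ (w.filter (fun z => z == x || z == y)).Chain' (· ≠ ·))

/-- A graph is word-representable if some word represents it. -/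
def WordRepresentable {V : Type*} [DecidableEq V] (G : SimpleGraph V) : Prop :=
  ∃ w : List V, WordRepresents w G

/-- The split graph `G(M)` of an `m × n` binary matrix `M`: vertices `Sum.inl j`
(`j : Fin n`) form a clique, vertices `Sum.inr i` (`i : Fin m`) form an independent set,
and `Sum.inr i` is adjacent to `Sum.inl j` iff `M i j = true`. -/
def splitGraph {m n : ℕ} (M : Fin m → Fin n → Bool) : SimpleGraph (Fin n ⊕ Fin m) :=
  SimpleGraph.fromRel (fun x y =>
    match x, y with
    | Sum.inl _, Sum.inl _ => True
    | Sum.inl j, Sum.inr i => M i j = true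
    | _, _ => False)

/-- `morphIter A B k` is the matrix `M^k(A,B)`, obtained from the `1 × 1` matrix `[0]`
by `k` iterations of the 2-dimensional morphism replacing `0` by the block `A`
and `1` by the block `B`. -/
def morphIter {m n : ℕ} (A B : Fin m → Fin n → Bool) :
    (k : ℕ) → Fin (m ^ k) → Fin (n ^ k) → Bool
  | 0, _, _ => false
  | k + 1, i, j =>
    have hm : 0 < m := Nat.pos_of_ne_zero (fun h => by
      have := i.isLt; simp [h] at this)
    have hn : 0 < n := Nat.pos_of_ne_zero (fun h => by
      have := j.isLt; simp [h] at this)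
    have hR : i.val / m < m ^ k :=
      (Nat.div_lt_iff_lt_mul hm).2 (by rw [← pow_succ]; exact i.isLt)
    have hC : j.val / n < n ^ k :=
      (Nat.div_lt_iff_lt_mul hn).2 (by rw [← pow_succ]; exact j.isLt)
    if morphIter A B k ⟨i.val / m, hR⟩ ⟨j.val / n, hC⟩ then
      B ⟨i.val % m, Nat.mod_lt _ hm⟩ ⟨j.val % n, Nat.mod_lt _ hn⟩
    else
      A ⟨i.val % m, Nat.mod_lt _ hm⟩ ⟨j.val % n, Nat.mod_lt _ hn⟩

/-- `Gk A B k` is the split graph `G^k(A,B) = G(M^k(A,B))`. -/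
def Gk {m n : ℕ} (A B : Fin m → Fin n → Bool) (k : ℕ) :
    SimpleGraph (Fin (n ^ k) ⊕ Fin (m ^ k)) :=
  splitGraph (morphIter A B k)

/-- The map `u` on binary strings: letterwise, `u(0)` is the top row of `A`
and `u(1)` is the top row of `B`, extended by concatenation. -/
def uMap (A B : Fin 2 → Fin 2 → Bool) : List Bool → List Bool :=
  fun v => v.flatMap (fun x => if x = true then [B 0 0, B 0 1] else [A 0 0, A 0 1])

/-- The map `l` on binary strings: letterwise, `l(0)` is the bottom row of `A`
and `l(1)` is the bottom row of `B`, extended by concatenation. -/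
def lMap (A B : Fin 2 → Fin 2 → Bool) : List Bool → List Bool :=
  fun v => v.flatMap (fun x => if x = true then [B 1 0, B 1 1] else [A 1 0, A 1 1])

/-- The order `x ≤ y` on binary strings of the same length:
`x i = 1` implies `y i = 1` for every position `i`. -/
def strLe (x y : List Bool) : Prop :=
  List.Forall₂ (fun a b => a = true → b = true) x y

lemma lexkey {K x y : ℕ} (hx : x < K) (hy : y < K) (a b : ℕ) :
    a * K + x < b * K + y ↔ a < b ∨ (a = b ∧ x < y) := by
  constructor
  · intro hlt
    rcases Nat.lt_trichotomy a b with hab | hab | hab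
    · exact Or.inl hab
    · subst hab; exact Or.inr ⟨rfl, by omega⟩
    · exfalso
      have : b * K + y < a * K + x := by
        calc b * K + y < b * K + K := by omega
          _ = (b + 1) * K := by ring
          _ ≤ a * K := Nat.mul_le_mul_right K hab
          _ ≤ a * K + x := Nat.le_add_right _ _
      omega
  · rintro (hab | ⟨rfl, hxy⟩)
    · calc a * K + x < a * K + K := by omega
        _ = (a + 1) * K := by ring
        _ ≤ b * K := Nat.mul_le_mul_right K hab
        _ ≤ b * K + y := Nat.le_add_right _ _
    · omega

lemma lexkey_inj {K x y : ℕ} (hx : x < K) (hy : y < K) {a b : ℕ}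
    (h : a * K + x = b * K + y) : a = b ∧ x = y := by
  have h1 : ¬ (a < b ∨ (a = b ∧ x < y)) := by rw [← lexkey hx hy]; omega
  have h2 : ¬ (b < a ∨ (b = a ∧ y < x)) := by rw [← lexkey hy hx]; omega
  constructor <;> omega

namespace SplitAux
variable {m' n' : ℕ} (M : Fin m' → Fin n' → Bool)

def wcol (j : Fin n') : ℕ := (Finset.univ.filter (fun i => M i j = true)).card
def wrow (i : Fin m') : ℕ := (Finset.univ.filter (fun j => M i j = true)).card
def pos (j : Fin n') : ℕ := (m' - wcol M j) * n' + j.val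
def Fi (i : Fin m') : ℕ := (Finset.univ.filter (fun j => M i j = true)).sup (fun j => pos M j + 1)

lemma wcol_le (j : Fin n') : wcol M j ≤ m' := by
  have := Finset.card_filter_le (Finset.univ : Finset (Fin m')) (fun i => M i j = true)
  simpa [wcol] using this

lemma wrow_le (i : Fin m') : wrow M i ≤ n' := by
  have := Finset.card_filter_le (Finset.univ : Finset (Fin n')) (fun j => M i j = true)
  simpa [wrow] using this

lemma pos_lt (j : Fin n') : pos M j < (m' + 1) * n' := by
  have h1 : m' - wcol M j ≤ m' := Nat.sub_le _ _
  calc pos M j = (m' - wcol M j) * n' + j.val := rfl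
    _ ≤ m' * n' + j.val := by exact Nat.add_le_add_right (Nat.mul_le_mul_right n' h1) _
    _ < m' * n' + n' := by omega
    _ = (m' + 1) * n' := by ring

lemma pos_anti {j j' : Fin n'} (h : wcol M j < wcol M j') : pos M j' < pos M j := by
  have h1 := wcol_le M j
  have h2 := wcol_le M j'
  have : m' - wcol M j' < m' - wcol M j := by omega
  exact (lexkey j'.isLt j.isLt _ _).2 (Or.inl this)

lemma wcol_le_of_pos_lt {j j' : Fin n'} (h : pos M j < pos M j') : wcol M j' ≤ wcol M j := by
  by_contra hc
  push_neg at hc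
  have := pos_anti M hc
  omega

lemma pos_inj : Function.Injective (pos M) := by
  intro j j' h
  unfold pos at h
  exact Fin.ext (lexkey_inj j.isLt j'.isLt h).2

variable (hch : ∀ i i' : Fin m', (∀ j, M i j = true → M i' j = true) ∨
    (∀ j, M i' j = true → M i j = true))

include hch in
lemma col_nest (j j' : Fin n') :
    (∀ i, M i j = true → M i j' = true) ∨ (∀ i, M i j' = true → M i j = true) := by
  by_cases hc : ∀ i, M i j = true → M i j' = true
  · exact Or.inl hc
  · push_neg at hc
    obtain ⟨i₁, h1, h1'⟩ := hc
    refine Or.inr (fun i₂ h2 => ?_)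
    rcases hch i₁ i₂ with hle | hle
    · exact hle j h1
    · exact absurd (hle j' h2) (by simpa using h1')

include hch in
lemma adj_of_wcol_le {i : Fin m'} {j j' : Fin n'} (hM : M i j = true) (hw : wcol M j ≤ wcol M j') :
    M i j' = true := by
  rcases col_nest M hch j j' with hle | hle
  · exact hle i hM
  · have hsub : (Finset.univ.filter (fun i => M i j' = true)) ⊆
        (Finset.univ.filter (fun i => M i j = true)) := by
      intro i hi
      simp only [Finset.mem_filter, Finset.mem_univ, true_and] at hi ⊢
      exact hle i hi
    have heq := Finset.eq_of_subset_of_card_le hsub hw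
    have : i ∈ (Finset.univ.filter (fun i => M i j' = true)) := by
      rw [heq]; simp [hM]
    simpa using this

include hch in
lemma row_mono {i i' : Fin m'} (hw : wrow M i ≤ wrow M i') {j : Fin n'} (hM : M i j = true) :
    M i' j = true := by
  rcases hch i i' with hle | hle
  · exact hle j hM
  · have hsub : (Finset.univ.filter (fun j => M i' j = true)) ⊆
        (Finset.univ.filter (fun j => M i j = true)) := by
      intro j hj
      simp only [Finset.mem_filter, Finset.mem_univ, true_and] at hj ⊢
      exact hle j hj
    have heq := Finset.eq_of_subset_of_card_le hsub hw
    have : j ∈ (Finset.univ.filter (fun j => M i' j = true)) := by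
      rw [heq]; simp [hM]
    simpa using this

include hch in
lemma adj_iff_pos_lt {i : Fin m'} {j : Fin n'} : M i j = true ↔ pos M j < Fi M i := by
  constructor
  · intro hM
    have : pos M j + 1 ≤ Fi M i :=
      Finset.le_sup (f := fun j => pos M j + 1) (by simp [hM])
    omega
  · intro hlt
    rw [Fi, Finset.lt_sup_iff] at hlt
    obtain ⟨j₀, hj₀, hlt⟩ := hlt
    simp only [Finset.mem_filter, Finset.mem_univ, true_and] at hj₀
    rcases Nat.lt_or_ge (pos M j) (pos M j₀) with hc | hc
    · exact adj_of_wcol_le M hch hj₀ (wcol_le_of_pos_lt M hc)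
    · have : pos M j = pos M j₀ := by omega
      rw [pos_inj M this]; exact hj₀

include hch in
lemma Fi_lt_iff {i i' : Fin m'} : Fi M i < Fi M i' ↔ wrow M i < wrow M i' := by
  constructor
  · intro hlt
    by_contra hc
    push_neg at hc
    have hsub : (Finset.univ.filter (fun j => M i' j = true)) ⊆
        (Finset.univ.filter (fun j => M i j = true)) := by
      intro j hj
      simp only [Finset.mem_filter, Finset.mem_univ, true_and] at hj ⊢
      exact row_mono M hch hc hj
    have : Fi M i' ≤ Fi M i := Finset.sup_mono hsub
    omega
  · intro hlt
    have hns : ¬ (Finset.univ.filter (fun j => M i' j = true)) ⊆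
        (Finset.univ.filter (fun j => M i j = true)) := by
      intro hsub
      have := Finset.card_le_card hsub
      unfold wrow at hlt
      omega
    obtain ⟨j, hj, hj'⟩ := Finset.not_subset.1 hns
    simp only [Finset.mem_filter, Finset.mem_univ, true_and] at hj hj'
    have h1 : Fi M i ≤ pos M j := by
      by_contra hc
      exact hj' ((adj_iff_pos_lt M hch).2 (by omega))
    have h2 : pos M j < Fi M i' := (adj_iff_pos_lt M hch).1 hj
    omega

include hch in
lemma Fi_le_iff {i i' : Fin m'} : Fi M i ≤ Fi M i' ↔ wrow M i ≤ wrow M i' := by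
  have h1 := Fi_lt_iff M hch (i := i) (i' := i')
  have h2 := Fi_lt_iff M hch (i := i') (i' := i)
  omega

end SplitAux

namespace SplitAux
variable {m' n' : ℕ} (M : Fin m' → Fin n' → Bool)

def k1 : Fin n' ⊕ Fin m' → ℕ
  | Sum.inl j => (pos M j + 1) * (m' + 1)
  | Sum.inr i => Fi M i * (m' + 1) + (i.val + 1)

def k2 : Fin n' ⊕ Fin m' → ℕ
  | Sum.inl j => pos M j
  | Sum.inr i => (m' + 1) * n' + ((n' - wrow M i) * (m' + 1) + (m' - i.val))

-- k1 comparisons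
lemma k1_ll {j j' : Fin n'} : k1 M (Sum.inl j) < k1 M (Sum.inl j') ↔ pos M j < pos M j' := by
  simp only [k1]
  have := lexkey (show (0:ℕ) < m' + 1 by omega) (show (0:ℕ) < m' + 1 by omega)
    (pos M j + 1) (pos M j' + 1)
  omega

lemma k2_ll {j j' : Fin n'} : k2 M (Sum.inl j) < k2 M (Sum.inl j') ↔ pos M j < pos M j' := Iff.rfl

variable (hch : ∀ i i' : Fin m', (∀ j, M i j = true → M i' j = true) ∨
    (∀ j, M i' j = true → M i j = true))

include hch in
lemma k1_lr {j : Fin n'} {i : Fin m'} :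
    k1 M (Sum.inl j) < k1 M (Sum.inr i) ↔ M i j = true := by
  have h0 : (0:ℕ) < m' + 1 := by omega
  have hi : i.val + 1 < m' + 1 := by omega
  have : (pos M j + 1) * (m' + 1) + 0 < Fi M i * (m' + 1) + (i.val + 1) ↔
      pos M j + 1 < Fi M i ∨ (pos M j + 1 = Fi M i ∧ 0 < i.val + 1) := lexkey h0 hi _ _
  simp only [k1]
  rw [adj_iff_pos_lt M hch]
  omega

include hch in
lemma k1_rl {j : Fin n'} {i : Fin m'} :
    k1 M (Sum.inr i) < k1 M (Sum.inl j) ↔ ¬ (M i j = true) := by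
  have h0 : (0:ℕ) < m' + 1 := by omega
  have hi : i.val + 1 < m' + 1 := by omega
  have : Fi M i * (m' + 1) + (i.val + 1) < (pos M j + 1) * (m' + 1) + 0 ↔
      Fi M i < pos M j + 1 ∨ (Fi M i = pos M j + 1 ∧ i.val + 1 < 0) := lexkey hi h0 _ _
  simp only [k1]
  rw [adj_iff_pos_lt M hch]
  omega

lemma k2_lr {j : Fin n'} {i : Fin m'} : k2 M (Sum.inl j) < k2 M (Sum.inr i) := by
  have := pos_lt M j
  simp only [k2]
  omega

include hch in
lemma k1_rr {i i' : Fin m'} :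
    k1 M (Sum.inr i) < k1 M (Sum.inr i') ↔
      (wrow M i < wrow M i' ∨ (wrow M i = wrow M i' ∧ i.val < i'.val)) := by
  have hi : i.val + 1 < m' + 1 := by omega
  have hi' : i'.val + 1 < m' + 1 := by omega
  simp only [k1]
  rw [lexkey hi hi']
  have h1 := Fi_lt_iff M hch (i := i) (i' := i')
  have h2 := Fi_lt_iff M hch (i := i') (i' := i)
  omega

omit hch in
lemma k2_rr {i i' : Fin m'} :
    k2 M (Sum.inr i) < k2 M (Sum.inr i') ↔
      (wrow M i' < wrow M i ∨ (wrow M i' = wrow M i ∧ i'.val < i.val)) := by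
  have hi : m' - i.val < m' + 1 := by omega
  have hi' : m' - i'.val < m' + 1 := by omega
  simp only [k2]
  have := lexkey hi hi' (n' - wrow M i) (n' - wrow M i')
  have hw := wrow_le M i
  have hw' := wrow_le M i'
  have hiv := i.isLt
  have hiv' := i'.isLt
  omega

lemma k1_inj : Function.Injective (k1 M) := by
  intro x y h
  match x, y with
  | Sum.inl j, Sum.inl j' =>
    simp only [k1] at h
    have : pos M j + 1 = pos M j' + 1 := Nat.eq_of_mul_eq_mul_right (by omega) h
    exact congrArg Sum.inl (pos_inj M (by omega))
  | Sum.inl j, Sum.inr i =>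
    exfalso
    simp only [k1] at h
    have h1 : ((pos M j + 1) * (m' + 1) + 0) = Fi M i * (m' + 1) + (i.val + 1) := by omega
    have := (lexkey_inj (by omega : (0:ℕ) < m'+1) (by omega : i.val + 1 < m'+1) h1).2
    omega
  | Sum.inr i, Sum.inl j =>
    exfalso
    simp only [k1] at h
    have h1 : ((pos M j + 1) * (m' + 1) + 0) = Fi M i * (m' + 1) + (i.val + 1) := by omega
    have := (lexkey_inj (by omega : (0:ℕ) < m'+1) (by omega : i.val + 1 < m'+1) h1).2
    omega
  | Sum.inr i, Sum.inr i' =>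
    simp only [k1] at h
    have := (lexkey_inj (by omega : i.val + 1 < m'+1) (by omega : i'.val + 1 < m'+1) h).2
    exact congrArg Sum.inr (Fin.ext (by omega))

lemma k2_inj : Function.Injective (k2 M) := by
  intro x y h
  match x, y with
  | Sum.inl j, Sum.inl j' => exact congrArg Sum.inl (pos_inj M h)
  | Sum.inl j, Sum.inr i => exact absurd h (by have := k2_lr M (j := j) (i := i); omega)
  | Sum.inr i, Sum.inl j => exact absurd h.symm (by have := k2_lr M (j := j) (i := i); omega)
  | Sum.inr i, Sum.inr i' =>
    simp only [k2] at h
    have h1 : (n' - wrow M i) * (m' + 1) + (m' - i.val) =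
        (n' - wrow M i') * (m' + 1) + (m' - i'.val) := by omega
    have := (lexkey_inj (by omega : m' - i.val < m'+1) (by omega : m' - i'.val < m'+1) h1).2
    have hiv := i.isLt
    have hiv' := i'.isLt
    exact congrArg Sum.inr (Fin.ext (by omega))

include hch in
lemma agree (x y : Fin n' ⊕ Fin m') (hxy : x ≠ y) :
    (splitGraph M).Adj x y ↔ (k1 M x < k1 M y ↔ k2 M x < k2 M y) := by
  rw [splitGraph, SimpleGraph.fromRel_adj]
  match x, y with
  | Sum.inl j, Sum.inl j' =>
    have hne : j ≠ j' := fun hc => hxy (by rw [hc])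
    have hpos : pos M j ≠ pos M j' := fun hc => hne (pos_inj M hc)
    simp only [k1_ll, k2_ll]
    constructor
    · intro _; trivial
    · intro _; exact ⟨hxy, Or.inl trivial⟩
  | Sum.inl j, Sum.inr i =>
    have h1 := k1_lr M hch (j := j) (i := i)
    have h2 := k2_lr M (j := j) (i := i)
    simp only []
    constructor
    · rintro ⟨-, hM | hF⟩
      · rw [h1]; exact iff_of_true hM h2
      · exact absurd hF (by simp)
    · intro hiff
      exact ⟨hxy, Or.inl (h1.1 (hiff.2 h2))⟩
  | Sum.inr i, Sum.inl j =>
    have h1 := k1_rl M hch (j := j) (i := i)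
    have h2 := k2_lr M (j := j) (i := i)
    constructor
    · rintro ⟨-, hF | hM⟩
      · exact absurd hF (by simp)
      · rw [h1]
        constructor
        · intro hn; exact absurd hM hn
        · intro hlt; omega
    · intro hiff
      refine ⟨hxy, Or.inr ?_⟩
      by_contra hM
      have := hiff.1 (h1.2 hM)
      omega
  | Sum.inr i, Sum.inr i' =>
    have hne : i ≠ i' := fun hc => hxy (by rw [hc])
    have hnev : i.val ≠ i'.val := fun hc => hne (Fin.ext hc)
    have h1 := k1_rr M hch (i := i) (i' := i')
    have h2 := k2_rr M (i := i) (i' := i')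
    constructor
    · rintro ⟨-, hF | hF⟩ <;> exact absurd hF (by simp)
    · intro hiff
      exfalso
      rw [h1, h2] at hiff
      omega

end SplitAux

namespace SplitAux

lemma two_elt {α : Type*} (κ : α → ℕ) (q : List α) (hqn : q.Nodup)
    (hqs : q.Pairwise (fun a b => κ a ≤ κ b)) {x y : α} (hxq : x ∈ q) (hyq : y ∈ q)
    (hmem : ∀ z ∈ q, z = x ∨ z = y) (hxy : κ x < κ y) : q = [x, y] := by
  match q with
  | [] => simp at hxq
  | [a] =>
    rcases hmem a (by simp) with rfl | rfl
    · simp at hyq; subst hyq; omega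
    · simp at hxq; subst hxq; omega
  | [a, b] =>
    have hab : a ≠ b := by simp [List.nodup_cons] at hqn; tauto
    have hord : κ a ≤ κ b := by
      simp only [List.pairwise_cons] at hqs
      exact hqs.1 b (by simp)
    rcases hmem a (by simp) with rfl | rfl
    · rcases hmem b (by simp [List.mem_cons]) with rfl | rfl
      · exact absurd rfl hab
      · rfl
    · rcases hmem b (by simp [List.mem_cons]) with rfl | rfl
      · omega
      · exact absurd rfl hab
  | a :: b :: c :: t =>
    exfalso
    have hab : a ≠ b := by
      have := List.pairwise_cons.1 hqn
      exact this.1 b (by simp)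
    have hac : a ≠ c := by
      have := List.pairwise_cons.1 hqn
      exact this.1 c (by simp)
    have hbc : b ≠ c := by
      have := List.pairwise_cons.1 (List.pairwise_cons.1 hqn).2
      exact this.1 c (by simp)
    rcases hmem a (by simp) with rfl | rfl <;>
      rcases hmem b (by simp) with h | h <;>
        rcases hmem c (by simp) with h' | h' <;> simp_all

lemma filt {α : Type*} [DecidableEq α] (κ : α → ℕ) (p : List α)
    (hs : List.Pairwise (fun a b => κ a ≤ κ b) p) (hn : p.Nodup) {x y : α}
    (hx : x ∈ p) (hy : y ∈ p) (hxy : κ x < κ y) :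
    p.filter (fun z => z == x || z == y) = [x, y] := by
  have hsub : (p.filter (fun z => z == x || z == y)).Sublist p := List.filter_sublist
  refine two_elt κ _ (hn.sublist hsub) (hs.sublist hsub)
    (List.mem_filter.2 ⟨hx, by simp⟩) (List.mem_filter.2 ⟨hy, by simp⟩) ?_ hxy
  intro z hz
  have := (List.mem_filter.1 hz).2
  simpa using this

lemma filt' {α : Type*} [DecidableEq α] (κ : α → ℕ) (p : List α)
    (hs : List.Pairwise (fun a b => κ a ≤ κ b) p) (hn : p.Nodup) {x y : α}
    (hx : x ∈ p) (hy : y ∈ p) (hyx : κ y < κ x) :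
    p.filter (fun z => z == x || z == y) = [y, x] := by
  have h := filt κ p hs hn hy hx hyx
  rw [← h]
  congr 1
  funext z
  exact Bool.or_comm _ _

lemma chain4a {α : Type*} (x y : α) (h : x ≠ y) :
    (([x, y] ++ [x, y] : List α)).Chain' (· ≠ ·) := by
  simp [List.Chain', List.isChain_cons_cons, h, h.symm]

lemma chain4b {α : Type*} (x y : α) :
    ¬ (([x, y] ++ [y, x] : List α)).Chain' (· ≠ ·) := by
  simp [List.Chain', List.isChain_cons_cons]

end SplitAux

theorem splitChain_rep {m' n' : ℕ} (M : Fin m' → Fin n' → Bool)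
    (hch : ∀ i i' : Fin m', (∀ j, M i j = true → M i' j = true) ∨
      (∀ j, M i' j = true → M i j = true)) :
    WordRepresentable (splitGraph M) := by
  have hinj1 := SplitAux.k1_inj M
  have hinj2 := SplitAux.k2_inj M
  letI i1t : IsTotal (Fin n' ⊕ Fin m') (fun a b => SplitAux.k1 M a ≤ SplitAux.k1 M b) :=
    ⟨fun a b => Nat.le_total _ _⟩
  letI i1tr : IsTrans (Fin n' ⊕ Fin m') (fun a b => SplitAux.k1 M a ≤ SplitAux.k1 M b) :=
    ⟨fun _ _ _ hab hbc => le_trans hab hbc⟩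
  letI i1a : IsAntisymm (Fin n' ⊕ Fin m') (fun a b => SplitAux.k1 M a ≤ SplitAux.k1 M b) :=
    ⟨fun _ _ h1 h2 => hinj1 (le_antisymm h1 h2)⟩
  letI i2t : IsTotal (Fin n' ⊕ Fin m') (fun a b => SplitAux.k2 M a ≤ SplitAux.k2 M b) :=
    ⟨fun a b => Nat.le_total _ _⟩
  letI i2tr : IsTrans (Fin n' ⊕ Fin m') (fun a b => SplitAux.k2 M a ≤ SplitAux.k2 M b) :=
    ⟨fun _ _ _ hab hbc => le_trans hab hbc⟩
  letI i2a : IsAntisymm (Fin n' ⊕ Fin m') (fun a b => SplitAux.k2 M a ≤ SplitAux.k2 M b) :=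
    ⟨fun _ _ h1 h2 => hinj2 (le_antisymm h1 h2)⟩
  set p1 := Finset.univ.sort (fun a b => SplitAux.k1 M a ≤ SplitAux.k1 M b) with hp1
  set p2 := Finset.univ.sort (fun a b => SplitAux.k2 M a ≤ SplitAux.k2 M b) with hp2
  have hs1 : List.Pairwise (fun a b => SplitAux.k1 M a ≤ SplitAux.k1 M b) p1 :=
    Finset.pairwise_sort _ _
  have hs2 : List.Pairwise (fun a b => SplitAux.k2 M a ≤ SplitAux.k2 M b) p2 :=
    Finset.pairwise_sort _ _
  have hn1 : p1.Nodup := Finset.sort_nodup _ _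
  have hn2 : p2.Nodup := Finset.sort_nodup _ _
  have hm1 : ∀ v, v ∈ p1 := fun v => (Finset.mem_sort _).2 (Finset.mem_univ v)
  have hm2 : ∀ v, v ∈ p2 := fun v => (Finset.mem_sort _).2 (Finset.mem_univ v)
  refine ⟨p1 ++ p2, fun v => List.mem_append.2 (Or.inl (hm1 v)), fun x y hxy => ?_⟩
  have hA := SplitAux.agree M hch x y hxy
  have hk1 : SplitAux.k1 M x ≠ SplitAux.k1 M y := fun hc => hxy (hinj1 hc)
  have hk2 : SplitAux.k2 M x ≠ SplitAux.k2 M y := fun hc => hxy (hinj2 hc)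
  rw [List.filter_append]
  rcases Nat.lt_or_ge (SplitAux.k1 M x) (SplitAux.k1 M y) with h1 | h1 <;>
    rcases Nat.lt_or_ge (SplitAux.k2 M x) (SplitAux.k2 M y) with h2 | h2
  · rw [SplitAux.filt _ p1 hs1 hn1 (hm1 x) (hm1 y) h1,
      SplitAux.filt _ p2 hs2 hn2 (hm2 x) (hm2 y) h2]
    exact iff_of_true (hA.2 (iff_of_true h1 h2)) (SplitAux.chain4a x y hxy)
  · have h2' : SplitAux.k2 M y < SplitAux.k2 M x := by omega
    rw [SplitAux.filt _ p1 hs1 hn1 (hm1 x) (hm1 y) h1,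
      SplitAux.filt' _ p2 hs2 hn2 (hm2 x) (hm2 y) h2']
    refine iff_of_false (fun hAdj => ?_) (SplitAux.chain4b x y)
    have := (hA.1 hAdj).1 h1
    omega
  · have h1' : SplitAux.k1 M y < SplitAux.k1 M x := by omega
    rw [SplitAux.filt' _ p1 hs1 hn1 (hm1 x) (hm1 y) h1',
      SplitAux.filt _ p2 hs2 hn2 (hm2 x) (hm2 y) h2]
    refine iff_of_false (fun hAdj => ?_) (SplitAux.chain4b y x)
    have := (hA.1 hAdj).2 h2
    omega
  · have h1' : SplitAux.k1 M y < SplitAux.k1 M x := by omega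
    have h2' : SplitAux.k2 M y < SplitAux.k2 M x := by omega
    rw [SplitAux.filt' _ p1 hs1 hn1 (hm1 x) (hm1 y) h1',
      SplitAux.filt' _ p2 hs2 hn2 (hm2 x) (hm2 y) h2']
    refine iff_of_true (hA.2 (iff_of_false (by omega) (by omega))) (SplitAux.chain4a y x hxy.symm)

lemma morphIter_succ {m n : ℕ} (A B : Fin m → Fin n → Bool) (k : ℕ)
    (i : Fin (m ^ (k + 1))) (j : Fin (n ^ (k + 1)))
    (h1 : i.val / m < m ^ k) (h2 : j.val / n < n ^ k)
    (h3 : i.val % m < m) (h4 : j.val % n < n) :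
    morphIter A B (k + 1) i j =
      if morphIter A B k ⟨i.val / m, h1⟩ ⟨j.val / n, h2⟩ then
        B ⟨i.val % m, h3⟩ ⟨j.val % n, h4⟩
      else
        A ⟨i.val % m, h3⟩ ⟨j.val % n, h4⟩ := rfl

section Chain
variable (A B : Fin 2 → Fin 2 → Bool)

-- the block dichotomy
lemma blockD
    (h : ∀ p ∈ [uMap A B [true, false, false], lMap A B [true, false, false],
                uMap A B [true, false, true], lMap A B [true, false, true]],
         ∀ q ∈ [uMap A B [true, false, false], lMap A B [true, false, false],
                uMap A B [true, false, true], lMap A B [true, false, true]],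
          strLe p q ∨ strLe q p)
    (s s' : Fin 2) :
    (∀ (b b' : Bool) (c : Fin 2), (b = true → b' = true) →
      (if b then B else A) s c = true → (if b' then B else A) s' c = true) ∨
    (∀ (b b' : Bool) (c : Fin 2), (b = true → b' = true) →
      (if b' then B else A) s' c = true → (if b then B else A) s c = true) := by
  fin_cases s <;> fin_cases s'
  · have hc := h (uMap A B [true, false, false]) (by simp)
      (uMap A B [true, false, true]) (by simp)
    simp only [uMap, lMap, strLe, List.flatMap, if_true, if_false, List.flatten,
      List.map, List.append_nil, List.cons_append, List.nil_append,
      List.forall₂_cons, List.forall₂_nil_left_iff, and_true] at hc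
    rcases hc with hc | hc <;> [left; right] <;>
      · rintro b b' c hbb'
        fin_cases c <;> cases b <;> cases b' <;> simp_all
  · have hc := h (uMap A B [true, false, false]) (by simp)
      (lMap A B [true, false, true]) (by simp)
    simp only [uMap, lMap, strLe, List.flatMap, if_true, if_false, List.flatten,
      List.map, List.append_nil, List.cons_append, List.nil_append,
      List.forall₂_cons, List.forall₂_nil_left_iff, and_true] at hc
    rcases hc with hc | hc <;> [left; right] <;>
      · rintro b b' c hbb'
        fin_cases c <;> cases b <;> cases b' <;> simp_all
  · have hc := h (lMap A B [true, false, false]) (by simp)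
      (uMap A B [true, false, true]) (by simp)
    simp only [uMap, lMap, strLe, List.flatMap, if_true, if_false, List.flatten,
      List.map, List.append_nil, List.cons_append, List.nil_append,
      List.forall₂_cons, List.forall₂_nil_left_iff, and_true] at hc
    rcases hc with hc | hc <;> [left; right] <;>
      · rintro b b' c hbb'
        fin_cases c <;> cases b <;> cases b' <;> simp_all
  · have hc := h (lMap A B [true, false, false]) (by simp)
      (lMap A B [true, false, true]) (by simp)
    simp only [uMap, lMap, strLe, List.flatMap, if_true, if_false, List.flatten,
      List.map, List.append_nil, List.cons_append, List.nil_append,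
      List.forall₂_cons, List.forall₂_nil_left_iff, and_true] at hc
    rcases hc with hc | hc <;> [left; right] <;>
      · rintro b b' c hbb'
        fin_cases c <;> cases b <;> cases b' <;> simp_all

lemma rows_chain
    (h : ∀ p ∈ [uMap A B [true, false, false], lMap A B [true, false, false],
                uMap A B [true, false, true], lMap A B [true, false, true]],
         ∀ q ∈ [uMap A B [true, false, false], lMap A B [true, false, false],
                uMap A B [true, false, true], lMap A B [true, false, true]],
          strLe p q ∨ strLe q p) :
    ∀ k (i i' : Fin (2 ^ k)),
      (∀ j, morphIter A B k i j = true → morphIter A B k i' j = true) ∨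
      (∀ j, morphIter A B k i' j = true → morphIter A B k i j = true) := by
  intro k
  induction k with
  | zero =>
    intro i i'
    left
    intro j hj
    simp [morphIter] at hj
  | succ k ih =>
    intro i i'
    have hpi : i.val / 2 < 2 ^ k := by
      have h2 : (i : ℕ) < 2 ^ k * 2 := by rw [← pow_succ]; exact i.isLt
      omega
    have hpi' : i'.val / 2 < 2 ^ k := by
      have h2 : (i' : ℕ) < 2 ^ k * 2 := by rw [← pow_succ]; exact i'.isLt
      omega
    have hsi : i.val % 2 < 2 := by omega
    have hsi' : i'.val % 2 < 2 := by omega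
    have hjlem : ∀ j : Fin (2 ^ (k + 1)), j.val / 2 < 2 ^ k ∧ j.val % 2 < 2 := by
      intro j
      have h2 : (j : ℕ) < 2 ^ k * 2 := by rw [← pow_succ]; exact j.isLt
      omega
    rcases ih ⟨i.val / 2, hpi⟩ ⟨i'.val / 2, hpi'⟩ with hle | hle
    · rcases blockD A B h ⟨i.val % 2, hsi⟩ ⟨i'.val % 2, hsi'⟩ with hD | hD
      · left
        intro j hj
        rw [morphIter_succ A B k i j hpi (hjlem j).1 hsi (hjlem j).2] at hj
        rw [morphIter_succ A B k i' j hpi' (hjlem j).1 hsi' (hjlem j).2]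
        rcases hv : morphIter A B k ⟨i.val / 2, hpi⟩ ⟨j.val / 2, (hjlem j).1⟩ with hv0 | hv1
        · rw [hv] at hj
          simp only [if_false, Bool.false_eq_true] at hj
          have := hD false (morphIter A B k ⟨i'.val / 2, hpi'⟩ ⟨j.val / 2, (hjlem j).1⟩)
            ⟨j.val % 2, (hjlem j).2⟩ (by simp) (by simpa using hj)
          cases hv' : morphIter A B k ⟨i'.val / 2, hpi'⟩ ⟨j.val / 2, (hjlem j).1⟩ <;>
            simp_all
        · rw [hv] at hj
          simp only [if_true] at hj
          have hv' : morphIter A B k ⟨i'.val / 2, hpi'⟩ ⟨j.val / 2, (hjlem j).1⟩ = true :=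
            hle _ hv
          have := hD true true ⟨j.val % 2, (hjlem j).2⟩ (fun h => h) (by simpa using hj)
          simp_all
      · right
        intro j hj
        rw [morphIter_succ A B k i' j hpi' (hjlem j).1 hsi' (hjlem j).2] at hj
        rw [morphIter_succ A B k i j hpi (hjlem j).1 hsi (hjlem j).2]
        have hb := hle ⟨j.val / 2, (hjlem j).1⟩
        have := hD (morphIter A B k ⟨i.val / 2, hpi⟩ ⟨j.val / 2, (hjlem j).1⟩)
          (morphIter A B k ⟨i'.val / 2, hpi'⟩ ⟨j.val / 2, (hjlem j).1⟩)
          ⟨j.val % 2, (hjlem j).2⟩ hb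
        cases hv : morphIter A B k ⟨i.val / 2, hpi⟩ ⟨j.val / 2, (hjlem j).1⟩ <;>
          cases hv' : morphIter A B k ⟨i'.val / 2, hpi'⟩ ⟨j.val / 2, (hjlem j).1⟩ <;>
            simp_all
    · rcases blockD A B h ⟨i'.val % 2, hsi'⟩ ⟨i.val % 2, hsi⟩ with hD | hD
      · right
        intro j hj
        rw [morphIter_succ A B k i' j hpi' (hjlem j).1 hsi' (hjlem j).2] at hj
        rw [morphIter_succ A B k i j hpi (hjlem j).1 hsi (hjlem j).2]
        have hb := hle ⟨j.val / 2, (hjlem j).1⟩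
        have := hD (morphIter A B k ⟨i'.val / 2, hpi'⟩ ⟨j.val / 2, (hjlem j).1⟩)
          (morphIter A B k ⟨i.val / 2, hpi⟩ ⟨j.val / 2, (hjlem j).1⟩)
          ⟨j.val % 2, (hjlem j).2⟩ hb
        cases hv : morphIter A B k ⟨i.val / 2, hpi⟩ ⟨j.val / 2, (hjlem j).1⟩ <;>
          cases hv' : morphIter A B k ⟨i'.val / 2, hpi'⟩ ⟨j.val / 2, (hjlem j).1⟩ <;>
            simp_all
      · left
        intro j hj
        rw [morphIter_succ A B k i j hpi (hjlem j).1 hsi (hjlem j).2] at hj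
        rw [morphIter_succ A B k i' j hpi' (hjlem j).1 hsi' (hjlem j).2]
        have hb := hle ⟨j.val / 2, (hjlem j).1⟩
        have := hD (morphIter A B k ⟨i'.val / 2, hpi'⟩ ⟨j.val / 2, (hjlem j).1⟩)
          (morphIter A B k ⟨i.val / 2, hpi⟩ ⟨j.val / 2, (hjlem j).1⟩)
          ⟨j.val % 2, (hjlem j).2⟩ hb
        cases hv : morphIter A B k ⟨i.val / 2, hpi⟩ ⟨j.val / 2, (hjlem j).1⟩ <;>
          cases hv' : morphIter A B k ⟨i'.val / 2, hpi'⟩ ⟨j.val / 2, (hjlem j).1⟩ <;>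
            simp_all

end Chain

theorem stmt16 (A B : Fin 2 → Fin 2 → Bool)
    (h : ∀ p ∈ [uMap A B [true, false, false], lMap A B [true, false, false],
                uMap A B [true, false, true], lMap A B [true, false, true]],
         ∀ q ∈ [uMap A B [true, false, false], lMap A B [true, false, false],
                uMap A B [true, false, true], lMap A B [true, false, true]],
          strLe p q ∨ strLe q p) :
    ∀ k : ℕ, WordRepresentable (Gk A B k) := by
  intro k
  exact splitChain_rep (morphIter A B k) (rows_chain A B h k)
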